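/- arXiv:1206.5923 — 3 statements merged into one kernel-verified Lean document; each statement's English description precedes it below -/
import Mathlib

section
/- Under conditions (a), (b) and (c), there exists an R-linear, faithful and exact functor V : E ⥤ End(T)-fgmod such that the composition of V with the forgetful functor End(T)-fgmod ⥤ ModuleCat R is naturally isomorphic to G, and such that for every object p of D the object V(S(p)) is isomorphic in End(T)-fgmod to T(p) with its tautological left End(T)-module structure, naturally in p. (This is the main construction in the proof of the paper's criterion, Proposition 2.7, in its finite-diagram form.) -/
/-!
# Nori's criterion for an equivalence (finite-diagram form)

Setting: `R` a commutative Noetherian ring, `D` a finite category,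
`T : D ⥤ ModuleCat R` with each `T.obj p` finitely generated over `R`;
`End T` is the `R`-algebra of natural endomorphisms of `T`, each `T.obj p`
is tautologically a left `End T`-module via `a • x = a.app p x`, and
`FGMod T` is the category of left `End T`-modules which are finitely
generated over `R`, with forgetful functor `fgForget T` to `ModuleCat R`.
`E` is an `R`-linear abelian category, `G : E ⥤ ModuleCat R` is `R`-linear,
faithful and exact, with values in finitely generated `R`-modules, and
`S : D ⥤ E` satisfies `G ∘ S = T` (given by the natural isomorphism `η`).

Conditions (a), (b), (c) of the paper are `conda`, `condb`, `condc` below.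
Conclusion: there is an equivalence `Φ : E ≌ FGMod T` which is additive and
`R`-linear (expressed after composing with the faithful forgetful functor
`fgForget T`, whose target `ModuleCat R` carries its standard `R`-linear
structure), together with a natural isomorphism `Φ ⋙ fgForget T ≅ G`, and a
natural isomorphism `S ⋙ Φ ≅ tautFunctorFG T` identifying `Φ (S p)` with
`T p` equipped with its tautological `End T`-module structure, naturally in
`p`.
-/

open CategoryTheory CategoryTheory.Limits

noncomputable section

namespace NoriCriterion

universe u

variable {R : Type u} [CommRing R]
variable {D : Type u} [SmallCategory D]
variable (T : D ⥤ ModuleCat.{u} R)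

/-- The tautological left `End T`-module structure on `T.obj p`, given by
`a • x = a.app p x`. -/
def tautModule (p : D) : Module (End T) (T.obj p) where
  smul a x := a.app p x
  one_smul x := rfl
  mul_smul a b x := rfl
  smul_zero a := map_zero (a.app p).hom
  smul_add a x y := map_add (a.app p).hom x y
  add_smul a b x := by
    show ((a + b).app p) x = (a.app p) x + (b.app p) x
    rw [NatTrans.app_add]; rfl
  zero_smul x := by
    show ((0 : End T).app p) x = 0
    rw [NatTrans.app_zero]; rfl

/-- `T.obj p`, seen as an object of `ModuleCat (End T)` via the tautological action. -/
def tautObj (p : D) : ModuleCat (End T) :=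
  @ModuleCat.of (End T) _ (T.obj p) _ (tautModule T p)

/-- `T.map f` is `End T`-linear for the tautological actions. -/
def tautMap {p q : D} (f : p ⟶ q) : tautObj T p ⟶ tautObj T q :=
  @ModuleCat.ofHom (End T) _ (T.obj p) (T.obj q) _ (tautModule T p) _ (tautModule T q) (show tautObj T p →ₗ[End T] tautObj T q from
  { toFun := fun x => T.map f x
    map_add' := fun x y => map_add (T.map f).hom x y
    map_smul' := fun a x => by
      show (T.map f) ((a.app p) x) = (a.app q) ((T.map f) x)
      exact (LinearMap.congr_fun (ModuleCat.hom_ext_iff.mp (a.naturality f)) x).symm })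

/-- The tautological representation `D ⥤ ModuleCat (End T)`. -/
def tautFunctor : D ⥤ ModuleCat (End T) where
  obj p := tautObj T p
  map f := tautMap T f
  map_id p := ModuleCat.hom_ext (LinearMap.ext fun x => by
    show (T.map (𝟙 p)) x = x
    rw [T.map_id]; rfl)
  map_comp f g := ModuleCat.hom_ext (LinearMap.ext fun x => by
    show (T.map (f ≫ g)) x = (T.map g) ((T.map f) x)
    rw [T.map_comp]; rfl)

/-- The category `End T`-fgmod of left `End T`-modules which are finitely
generated over `R` (equivalently, over `End T`). -/
def FGMod :=
  ObjectProperty.FullSubcategory (fun M : ModuleCat.{u} (End T) =>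
    Module.Finite R ((ModuleCat.restrictScalars (algebraMap R (End T))).obj M))

instance : Category (FGMod T) :=
  ObjectProperty.FullSubcategory.category _

/-- The forgetful functor `End T`-fgmod `⥤ ModuleCat R`. -/
def fgForget : FGMod T ⥤ ModuleCat.{u} R :=
  ObjectProperty.ι _ ⋙ ModuleCat.restrictScalars (algebraMap R (End T))

theorem taut_fg (p : D) [h : Module.Finite R (T.obj p)] :
    Module.Finite R
      ((ModuleCat.restrictScalars (algebraMap R (End T))).obj (tautObj T p)) := by
  let e : (T.obj p) →ₗ[R]
      ((ModuleCat.restrictScalars (algebraMap R (End T))).obj (tautObj T p)) :=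
    { toFun := fun x => x
      map_add' := fun _ _ => rfl
      map_smul' := fun r x => by
        show r • x = ((algebraMap R (End T) r).app p) x
        rw [Algebra.algebraMap_eq_smul_one]
        show r • x = ((r • (𝟙 T : End T)).app p) x
        rw [NatTrans.app_smul]
        rfl }
  exact Module.Finite.of_surjective e (fun y => ⟨y, rfl⟩)

/-- The tautological representation `D ⥤ FGMod T`, `p ↦ T.obj p` with its
tautological `End T`-module structure. -/
def tautFunctorFG [∀ p : D, Module.Finite R (T.obj p)] : D ⥤ FGMod T :=
  ObjectProperty.lift _ (tautFunctor T) (fun p => taut_fg T p)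

instance restrictScalarsReflectsIsos {R S : Type u} [CommRing R] [Ring S] (f : R →+* S) :
    (ModuleCat.restrictScalars.{u} f).ReflectsIsomorphisms where
  reflects {X Y} g _ := by
    have hbij : Function.Bijective g := by
      have h : IsIso ((forget (ModuleCat R)).map ((ModuleCat.restrictScalars f).map g)) :=
        Functor.map_isIso _ _
      rw [CategoryTheory.isIso_iff_bijective] at h
      exact h
    let e : X ≃ₗ[S] Y := LinearEquiv.ofBijective g.hom hbij
    exact ⟨⟨ModuleCat.ofHom e.symm.toLinearMap, ModuleCat.hom_ext (LinearMap.ext e.symm_apply_apply),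
      ModuleCat.hom_ext (LinearMap.ext e.apply_symm_apply)⟩⟩

section Construction

variable {R : Type u} [CommRing R]
variable {D : Type u} [SmallCategory D]
variable {T : D ⥤ ModuleCat.{u} R}
variable {E : Type u} [Category.{u} E] [Abelian E] [Linear R E]
variable {G : E ⥤ ModuleCat.{u} R} {S : D ⥤ E} (η : S ⋙ G ≅ T)



/-- auxiliary map -/
def phi {A : E} {p : D} (u : S.obj p ⟶ A) : T.obj p ⟶ G.obj A :=
  η.inv.app p ≫ G.map u

lemma phi_comp {A B : E} {p : D} (u : S.obj p ⟶ A) (f : A ⟶ B) (x : T.obj p) :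
    phi η (u ≫ f) x = G.map f (phi η u x) := by
  simp [phi]

lemma phi_Smap {p q : D} (i : p ⟶ q) {A : E} (v : S.obj q ⟶ A) (x : T.obj p) :
    phi η (S.map i ≫ v) x = phi η v (T.map i x) := by
  have h := η.inv.naturality i
  simp only [phi, Functor.comp_map] at h ⊢
  rw [G.map_comp]
  change G.map v (G.map (S.map i) (η.inv.app p x)) = G.map v (η.inv.app q (T.map i x))
  congr 1
  exact (LinearMap.congr_fun (ModuleCat.hom_ext_iff.mp h) x).symm

variable [G.Faithful] [G.Additive] [PreservesFiniteLimits G] [PreservesFiniteColimits G]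

lemma phi_surj {A : E} {p : D} (u : S.obj p ⟶ A) (hu : Epi u) :
    Function.Surjective (phi η u) := by
  rw [show (phi η u : T.obj p → G.obj A) = (G.map u) ∘ (η.inv.app p) from rfl]
  refine Function.Surjective.comp ?_ ?_
  · have : Epi (G.map u) := G.map_epi u
    rwa [ModuleCat.epi_iff_surjective] at this
  · exact (ConcreteCategory.bijective_of_isIso (η.inv.app p)).2

section Presentation
variable (hb : ∀ A : E, ∃ (p : D) (w : S.obj p ⟶ A), Epi w)
variable (hc : ∀ (p : D) (A : E) (w : S.obj p ⟶ A) (a : End T) (x : T.obj p),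
      (η.inv.app p ≫ G.map w) x = 0 →
        (η.inv.app p ≫ G.map w) ((a.app p) x) = 0)

/-- chosen presentation object -/
def pA (A : E) : D := (hb A).choose

/-- chosen presentation map -/
def wA (A : E) : S.obj (pA hb A) ⟶ A := (hb A).choose_spec.choose

lemma wA_epi (A : E) : Epi (wA hb A) := (hb A).choose_spec.choose_spec

/-- chosen preimage -/
def sec (A : E) (y : G.obj A) : T.obj (pA hb A) :=
  (phi_surj η (wA hb A) (wA_epi hb A) y).choose

lemma sec_spec (A : E) (y : G.obj A) : phi η (wA hb A) (sec η hb A y) = y :=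
  (phi_surj η (wA hb A) (wA_epi hb A) y).choose_spec

include hc in
lemma phi_congr {p : D} {A : E} (u : S.obj p ⟶ A) (a : End T) {x x' : T.obj p}
    (h : phi η u x = phi η u x') : phi η u (a.app p x) = phi η u (a.app p x') := by
  have h0 : phi η u (x - x') = 0 := by rw [map_sub, h, sub_self]
  have := hc p A u a (x - x') h0
  rw [map_sub, map_sub] at this
  change phi η u _ - phi η u _ = 0 at this
  rw [sub_eq_zero] at this
  exact this

/-- the action of `End T` on `G.obj A` -/
def smulG (A : E) (a : End T) (y : G.obj A) : G.obj A :=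
  phi η (wA hb A) (a.app (pA hb A) (sec η hb A y))

include hc in
lemma smulG_spec (A : E) (a : End T) (x : T.obj (pA hb A)) (y : G.obj A)
    (h : phi η (wA hb A) x = y) :
    smulG η hb A a y = phi η (wA hb A) (a.app (pA hb A) x) := by
  refine phi_congr η hc (wA hb A) a ?_
  rw [sec_spec, h]

end Presentation

section Key
variable (hb : ∀ A : E, ∃ (p : D) (w : S.obj p ⟶ A), Epi w)
variable (hc : ∀ (p : D) (A : E) (w : S.obj p ⟶ A) (a : End T) (x : T.obj p),
      (η.inv.app p ≫ G.map w) x = 0 →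
        (η.inv.app p ≫ G.map w) ((a.app p) x) = 0)
variable (ha : ∀ p p' : D, ∃ (q : D) (i : p ⟶ q) (i' : p' ⟶ q),
      IsIso (biprod.desc (T.map i) (T.map i')))

include ha hc in
lemma smul_phi {A : E} {p : D} (u : S.obj p ⟶ A) (a : End T) (x : T.obj p) :
    phi η u (a.app p x) = smulG η hb A a (phi η u x) := by
  obtain ⟨q, i, i', hiso⟩ := ha p (pA hb A)
  -- the biproduct comparison in E
  haveI : PreservesBinaryBiproduct (S.obj p) (S.obj (pA hb A)) G :=
    preservesBinaryBiproduct_of_preservesBinaryProduct G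
  set dS : S.obj p ⊞ S.obj (pA hb A) ⟶ S.obj q := biprod.desc (S.map i) (S.map i') with hdS
  have hGdS : (G.mapBiprod (S.obj p) (S.obj (pA hb A))).inv ≫ G.map dS =
      biprod.map (η.hom.app p) (η.hom.app (pA hb A)) ≫
        biprod.desc (T.map i) (T.map i') ≫ η.inv.app q := by
    apply biprod.hom_ext' <;>
      simp only [Functor.mapBiprod_inv, biprod.inl_desc_assoc, biprod.inr_desc_assoc,
        biprod.inl_map_assoc, biprod.inr_map_assoc, biprod.inl_desc, biprod.inr_desc,
        ← G.map_comp, hdS]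
    · have := η.hom.naturality i
      simp only [Functor.comp_map] at this
      rw [← Category.assoc, ← this]
      simp
    · have := η.hom.naturality i'
      simp only [Functor.comp_map] at this
      rw [← Category.assoc, ← this]
      simp
  haveI : IsIso (G.map dS) := by
    have : G.map dS = (G.mapBiprod (S.obj p) (S.obj (pA hb A))).hom ≫
        (biprod.mapIso (asIso (η.hom.app p)) (asIso (η.hom.app (pA hb A)))).hom ≫
        biprod.desc (T.map i) (T.map i') ≫ η.inv.app q := by
      simp only [biprod.mapIso_hom, asIso_hom]
      rw [← hGdS, ← Category.assoc, Iso.hom_inv_id, Category.id_comp]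
    rw [this]
    infer_instance
  haveI : IsIso dS := isIso_of_reflects_iso dS G
  set v : S.obj q ⟶ A := inv dS ≫ biprod.desc u (wA hb A) with hv
  have hvi : S.map i ≫ v = u := by
    rw [hv, show S.map i = biprod.inl ≫ dS from (biprod.inl_desc _ _).symm]
    simp
  have hvi' : S.map i' ≫ v = wA hb A := by
    rw [hv, show S.map i' = biprod.inr ≫ dS from (biprod.inr_desc _ _).symm]
    simp
  set x2 := sec η hb A (phi η u x) with hx2
  have h1 : phi η v (T.map i x) = phi η u x := by rw [← phi_Smap, hvi]
  have h2 : phi η v (T.map i' x2) = phi η u x := by rw [← phi_Smap, hvi', hx2, sec_spec]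
  have h3 : phi η v (a.app q (T.map i x)) = phi η v (a.app q (T.map i' x2)) :=
    phi_congr η hc v a (h1.trans h2.symm)
  have hnat : ∀ {r r' : D} (j : r ⟶ r') (z : T.obj r),
      T.map j (a.app r z) = a.app r' (T.map j z) := by
    intro r r' j z
    exact (LinearMap.congr_fun (ModuleCat.hom_ext_iff.mp (a.naturality j)) z).symm
  calc phi η u (a.app p x) = phi η v (T.map i (a.app p x)) := by rw [← phi_Smap, hvi]
    _ = phi η v (a.app q (T.map i x)) := by rw [hnat]
    _ = phi η v (a.app q (T.map i' x2)) := h3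
    _ = phi η v (T.map i' (a.app (pA hb A) x2)) := by rw [hnat]
    _ = phi η (wA hb A) (a.app (pA hb A) x2) := by rw [← phi_Smap, hvi']
    _ = smulG η hb A a (phi η u x) := rfl

end Key

section ModStr
variable (hb : ∀ A : E, ∃ (p : D) (w : S.obj p ⟶ A), Epi w)
variable (hc : ∀ (p : D) (A : E) (w : S.obj p ⟶ A) (a : End T) (x : T.obj p),
      (η.inv.app p ≫ G.map w) x = 0 →
        (η.inv.app p ≫ G.map w) ((a.app p) x) = 0)
variable (ha : ∀ p p' : D, ∃ (q : D) (i : p ⟶ q) (i' : p' ⟶ q),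
      IsIso (biprod.desc (T.map i) (T.map i')))

/-- the `End T`-module structure on `G.obj A` -/
def gMod (A : E) : Module (End T) (G.obj A) where
  smul a y := smulG η hb A a y
  one_smul y := by
    show smulG η hb A 1 y = y
    show phi η (wA hb A) (((1 : End T)).app _ (sec η hb A y)) = y
    rw [End.one_def, NatTrans.id_app]
    show phi η (wA hb A) (sec η hb A y) = y
    exact sec_spec η hb A y
  mul_smul a b y := by
    show smulG η hb A (a * b) y = smulG η hb A a (smulG η hb A b y)
    show phi η (wA hb A) ((a * b).app _ (sec η hb A y)) =
      smulG η hb A a (smulG η hb A b y)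
    rw [End.mul_def, NatTrans.comp_app]
    show phi η (wA hb A) (a.app _ (b.app _ (sec η hb A y))) = _
    rw [smul_phi η hb hc ha (wA hb A) a (b.app _ (sec η hb A y))]
    rfl
  smul_zero a := by
    show smulG η hb A a 0 = 0
    show phi η (wA hb A) (a.app _ (sec η hb A 0)) = 0
    have h : phi η (wA hb A) (sec η hb A 0) = phi η (wA hb A) 0 := by
      rw [sec_spec, map_zero]
    rw [phi_congr η hc (wA hb A) a h, map_zero, map_zero]
  smul_add a y y' := by
    show smulG η hb A a (y + y') = smulG η hb A a y + smulG η hb A a y'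
    have h : phi η (wA hb A) (sec η hb A (y + y')) =
        phi η (wA hb A) (sec η hb A y + sec η hb A y') := by
      rw [sec_spec, map_add, sec_spec, sec_spec]
    show phi η (wA hb A) (a.app _ (sec η hb A (y + y'))) = _
    rw [phi_congr η hc (wA hb A) a h, map_add, map_add]
    rfl
  add_smul a b y := by
    show smulG η hb A (a + b) y = smulG η hb A a y + smulG η hb A b y
    show phi η (wA hb A) ((a + b).app _ (sec η hb A y)) = _
    rw [NatTrans.app_add]
    show phi η (wA hb A) (a.app _ (sec η hb A y) + b.app _ (sec η hb A y)) = _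
    rw [map_add]
    rfl
  zero_smul y := by
    show smulG η hb A (0 : End T) y = 0
    show phi η (wA hb A) ((0 : End T).app _ (sec η hb A y)) = 0
    rw [NatTrans.app_zero]
    show phi η (wA hb A) 0 = 0
    rw [map_zero]

lemma gMod_algebraMap (A : E) (r : R) (y : G.obj A) :
    smulG η hb A (algebraMap R (End T) r) y = r • y := by
  show phi η (wA hb A) ((algebraMap R (End T) r).app _ (sec η hb A y)) = r • y
  rw [Algebra.algebraMap_eq_smul_one]
  show phi η (wA hb A) ((r • (𝟙 T : End T)).app _ (sec η hb A y)) = r • y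
  rw [NatTrans.app_smul]
  show phi η (wA hb A) (r • sec η hb A y) = r • y
  rw [map_smul, sec_spec]

end ModStr

section Vfun
variable (hb : ∀ A : E, ∃ (p : D) (w : S.obj p ⟶ A), Epi w)
variable (hc : ∀ (p : D) (A : E) (w : S.obj p ⟶ A) (a : End T) (x : T.obj p),
      (η.inv.app p ≫ G.map w) x = 0 →
        (η.inv.app p ≫ G.map w) ((a.app p) x) = 0)
variable (ha : ∀ p p' : D, ∃ (q : D) (i : p ⟶ q) (i' : p' ⟶ q),
      IsIso (biprod.desc (T.map i) (T.map i')))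
variable (hGfin : ∀ A : E, Module.Finite R (G.obj A))

include hGfin in
/-- the object part of `V` -/
def VObj (A : E) : FGMod T := by
  refine ⟨@ModuleCat.of (End T) _ (G.obj A) _ (gMod η hb hc ha A), ?_⟩
  letI : Module (End T) (G.obj A) := gMod η hb hc ha A
  let e : (G.obj A) →ₗ[R] ((ModuleCat.restrictScalars (algebraMap R (End T))).obj
      (@ModuleCat.of (End T) _ (G.obj A) _ (gMod η hb hc ha A))) :=
    { toFun := fun x => x
      map_add' := fun _ _ => rfl
      map_smul' := fun r x => (gMod_algebraMap η hb A r x).symm }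
  exact Module.Finite.of_surjective (hM := hGfin A) e (fun y => ⟨y, rfl⟩)

/-- the morphism part of `V` -/
def VMap {A B : E} (f : A ⟶ B) : VObj η hb hc ha hGfin A ⟶ VObj η hb hc ha hGfin B :=
  InducedCategory.homMk (@ModuleCat.ofHom (End T) _ (G.obj A) (G.obj B) _ (gMod η hb hc ha A) _
    (gMod η hb hc ha B)
  (show (VObj η hb hc ha hGfin A).obj →ₗ[End T] (VObj η hb hc ha hGfin B).obj from
  { toFun := fun y => G.map f y
    map_add' := fun y y' => map_add (G.map f).hom y y'
    map_smul' := fun a (y : G.obj A) => by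
      show G.map f (smulG η hb A a y) = smulG η hb B a (G.map f y)
      show G.map f (phi η (wA hb A) (a.app _ (sec η hb A y))) = _
      rw [← phi_comp η (wA hb A) f, smul_phi η hb hc ha (wA hb A ≫ f) a, phi_comp,
        sec_spec] }))

/-- the comparison functor `V` -/
def Vfunctor : E ⥤ FGMod T where
  obj A := VObj η hb hc ha hGfin A
  map f := VMap η hb hc ha hGfin f
  map_id A := InducedCategory.hom_ext (ModuleCat.hom_ext (LinearMap.ext fun y => by
    show G.map (𝟙 A) y = y
    rw [G.map_id]; rfl))
  map_comp f g := InducedCategory.hom_ext (ModuleCat.hom_ext (LinearMap.ext fun y => by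
    show G.map (f ≫ g) y = G.map g (G.map f y)
    rw [G.map_comp]; rfl))

end Vfun

section Isos
variable (hb : ∀ A : E, ∃ (p : D) (w : S.obj p ⟶ A), Epi w)
variable (hc : ∀ (p : D) (A : E) (w : S.obj p ⟶ A) (a : End T) (x : T.obj p),
      (η.inv.app p ≫ G.map w) x = 0 →
        (η.inv.app p ≫ G.map w) ((a.app p) x) = 0)
variable (ha : ∀ p p' : D, ∃ (q : D) (i : p ⟶ q) (i' : p' ⟶ q),
      IsIso (biprod.desc (T.map i) (T.map i')))
variable (hGfin : ∀ A : E, Module.Finite R (G.obj A))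

lemma phi_id (p : D) (x : T.obj p) : phi η (𝟙 (S.obj p)) x = η.inv.app p x := by
  simp [phi]

include hc ha in
lemma smul_etaInv (p : D) (a : End T) (x : T.obj p) :
    η.inv.app p (a.app p x) = smulG η hb (S.obj p) a (η.inv.app p x) := by
  rw [← phi_id η, ← phi_id η, smul_phi η hb hc ha (𝟙 (S.obj p)) a x]

/-- the natural isomorphism `V ⋙ fgForget T ≅ G` -/
def isoGhom (A : E) :
    (Vfunctor η hb hc ha hGfin ⋙ fgForget T).obj A ⟶ G.obj A :=
  ModuleCat.ofHom (X := (Vfunctor η hb hc ha hGfin ⋙ fgForget T).obj A) (Y := G.obj A)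
  { toFun := fun y => y
    map_add' := fun _ _ => rfl
    map_smul' := fun r y => gMod_algebraMap η hb A r y }

def isoGinv (A : E) :
    G.obj A ⟶ (Vfunctor η hb hc ha hGfin ⋙ fgForget T).obj A :=
  ModuleCat.ofHom (X := G.obj A) (Y := (Vfunctor η hb hc ha hGfin ⋙ fgForget T).obj A)
  { toFun := fun y => y
    map_add' := fun _ _ => rfl
    map_smul' := fun r y => (gMod_algebraMap η hb A r y).symm }

/-- the natural isomorphism `V ⋙ fgForget T ≅ G` -/
def isoG : Vfunctor η hb hc ha hGfin ⋙ fgForget T ≅ G := by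
  refine NatIso.ofComponents (fun A => ?_) (fun {A B} f => ?_)
  · exact
      { hom := isoGhom η hb hc ha hGfin A
        inv := isoGinv η hb hc ha hGfin A
        hom_inv_id := ModuleCat.hom_ext (LinearMap.ext fun y => rfl)
        inv_hom_id := ModuleCat.hom_ext (LinearMap.ext fun y => rfl) }
  · exact ModuleCat.hom_ext (LinearMap.ext fun y => rfl)

/-- component of the tautological comparison -/
def tautHomV (p : D) :
    (VObj η hb hc ha hGfin (S.obj p)).obj ⟶ tautObj T p :=
  @ModuleCat.ofHom (End T) _ (G.obj (S.obj p)) (T.obj p) _ (gMod η hb hc ha (S.obj p)) _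
    (tautModule T p)
  (show (VObj η hb hc ha hGfin (S.obj p)).obj →ₗ[End T] tautObj T p from
  { toFun := fun y => η.hom.app p y
    map_add' := fun y y' => map_add (η.hom.app p).hom y y'
    map_smul' := fun a y => by
      show η.hom.app p (smulG η hb (S.obj p) a y) = a.app p (η.hom.app p y)
      conv_lhs => rw [show y = η.inv.app p (η.hom.app p y) from
        (LinearMap.congr_fun (ModuleCat.hom_ext_iff.mp (η.hom_inv_id_app p)) y).symm]
      rw [← smul_etaInv η hb hc ha p a (η.hom.app p y)]
      exact LinearMap.congr_fun (ModuleCat.hom_ext_iff.mp (η.inv_hom_id_app p)) _ })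

/-- inverse component of the tautological comparison -/
def tautInvV (p : D) :
    tautObj T p ⟶ (VObj η hb hc ha hGfin (S.obj p)).obj :=
  @ModuleCat.ofHom (End T) _ (T.obj p) (G.obj (S.obj p)) _ (tautModule T p) _
    (gMod η hb hc ha (S.obj p))
  (show tautObj T p →ₗ[End T] (VObj η hb hc ha hGfin (S.obj p)).obj from
  { toFun := fun x => η.inv.app p x
    map_add' := fun x x' => map_add (η.inv.app p).hom x x'
    map_smul' := fun a x => by
      show η.inv.app p (a.app p x) = smulG η hb (S.obj p) a (η.inv.app p x)
      exact smul_etaInv η hb hc ha p a x })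

/-- the natural isomorphism `S ⋙ V ≅ tautFunctorFG T` -/
def isoTaut [∀ p : D, Module.Finite R (T.obj p)] :
    S ⋙ Vfunctor η hb hc ha hGfin ≅ tautFunctorFG T := by
  refine NatIso.ofComponents (fun p => ?_) (fun {p q} f => ?_)
  · exact
      { hom := InducedCategory.homMk (tautHomV η hb hc ha hGfin p)
        inv := InducedCategory.homMk (tautInvV η hb hc ha hGfin p)
        hom_inv_id := InducedCategory.hom_ext (ModuleCat.hom_ext (LinearMap.ext fun y =>
          LinearMap.congr_fun (ModuleCat.hom_ext_iff.mp (η.hom_inv_id_app p)) y))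
        inv_hom_id := InducedCategory.hom_ext (ModuleCat.hom_ext (LinearMap.ext fun x =>
          LinearMap.congr_fun (ModuleCat.hom_ext_iff.mp (η.inv_hom_id_app p)) x)) }
  · refine InducedCategory.hom_ext (ModuleCat.hom_ext (LinearMap.ext fun y => ?_))
    show η.hom.app q (G.map (S.map f) y) = T.map f (η.hom.app p y)
    exact LinearMap.congr_fun (ModuleCat.hom_ext_iff.mp (η.hom.naturality f)) y

end Isos


end Construction

/-- **Construction of the functor `V`** (main construction in the proof of
Proposition 2.7 of Ayoub–Barbieri-Viale, "Nori 1-motives", finite-diagram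
form).

Under conditions (a), (b) and (c), there is an `R`-linear, faithful and
exact functor `V : E ⥤ End T`-fgmod whose composition with the forgetful
functor to `ModuleCat R` is naturally isomorphic to `G` and such that
`V (S p)` is isomorphic to the tautological `End T`-module `T p`, naturally
in `p`. (Exactness is expressed as preservation of finite limits and finite
colimits; `R`-linearity and additivity of `V` are expressed through the
faithful forgetful functor `fgForget T`.) -/
theorem exists_comparison_functor
    [IsNoetherianRing R] [FinCategory D]
    [∀ p : D, Module.Finite R (T.obj p)]
    {E : Type u} [Category.{u} E] [Abelian E] [Linear R E]
    (G : E ⥤ ModuleCat.{u} R) [G.Faithful] [G.Additive] [G.Linear R]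
    [PreservesFiniteLimits G] [PreservesFiniteColimits G]
    (hGfin : ∀ A : E, Module.Finite R (G.obj A))
    (S : D ⥤ E) (η : S ⋙ G ≅ T)
    -- condition (a)
    (conda : ∀ p p' : D, ∃ (q : D) (i : p ⟶ q) (i' : p' ⟶ q),
      IsIso (biprod.desc (T.map i) (T.map i')))
    -- condition (b)
    (condb : ∀ A : E, ∃ (p : D) (w : S.obj p ⟶ A), Epi w)
    -- condition (c)
    (condc : ∀ (p : D) (A : E) (w : S.obj p ⟶ A) (a : End T) (x : T.obj p),
      (η.inv.app p ≫ G.map w) x = 0 →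
        (η.inv.app p ≫ G.map w) ((a.app p) x) = 0) :
    ∃ (V : E ⥤ FGMod T)
      (_ : V ⋙ fgForget T ≅ G)
      (_ : S ⋙ V ≅ tautFunctorFG T),
      V.Faithful ∧
      PreservesFiniteLimits V ∧ PreservesFiniteColimits V ∧
      (∀ (X Y : E) (f g : X ⟶ Y),
        (fgForget T).map (V.map (f + g)) =
          (fgForget T).map (V.map f) + (fgForget T).map (V.map g)) ∧
      (∀ (X Y : E) (r : R) (f : X ⟶ Y),
        (fgForget T).map (V.map (r • f)) =
          r • (fgForget T).map (V.map f)) := by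
  refine ⟨Vfunctor η condb condc conda hGfin, isoG η condb condc conda hGfin,
    isoTaut η condb condc conda hGfin, ?_, ?_, ?_, ?_, ?_⟩
  · refine ⟨fun {X Y f g} h => G.map_injective (ModuleCat.hom_ext (LinearMap.ext fun x => ?_))⟩
    exact LinearMap.congr_fun (ModuleCat.hom_ext_iff.mp (congrArg (fgForget T).map h)) x
  · haveI : PreservesFiniteLimits (ModuleCat.restrictScalars.{u} (algebraMap R (End T))) :=
      ⟨fun _ _ _ => ⟨fun {F} => ModuleCat.preservesLimit_restrictScalars _ F⟩⟩
    haveI : ReflectsFiniteLimits (fgForget T) := ⟨fun J _ _ => by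
      haveI : ReflectsLimitsOfShape J (ModuleCat.restrictScalars.{u} (algebraMap R (End T))) :=
        reflectsLimitsOfShape_of_reflectsIsomorphisms
      exact inferInstanceAs (ReflectsLimitsOfShape J
        (ObjectProperty.ι _ ⋙ ModuleCat.restrictScalars (algebraMap R (End T))))⟩
    haveI : PreservesFiniteLimits (Vfunctor η condb condc conda hGfin ⋙ fgForget T) :=
      preservesFiniteLimits_of_natIso (isoG η condb condc conda hGfin).symm
    exact preservesFiniteLimits_of_reflects_of_preserves _ (fgForget T)
  · haveI : PreservesFiniteColimits (ModuleCat.restrictScalars.{u} (algebraMap R (End T))) :=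
      ⟨fun _ _ _ => ⟨fun {F} => inferInstance⟩⟩
    haveI : ReflectsFiniteColimits (fgForget T) := ReflectsFiniteColimits.mk (reflects := fun J _ _ => by
      haveI : ReflectsColimitsOfShape J (ModuleCat.restrictScalars.{u} (algebraMap R (End T))) :=
        reflectsColimitsOfShape_of_reflectsIsomorphisms
      exact inferInstanceAs (ReflectsColimitsOfShape J
        (ObjectProperty.ι _ ⋙ ModuleCat.restrictScalars (algebraMap R (End T)))))
    haveI : PreservesFiniteColimits (Vfunctor η condb condc conda hGfin ⋙ fgForget T) :=
      preservesFiniteColimits_of_natIso (isoG η condb condc conda hGfin).symm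
    exact preservesFiniteColimits_of_reflects_of_preserves _ (fgForget T)
  · intro X Y f g
    refine ModuleCat.hom_ext (LinearMap.ext fun x => ?_)
    show G.map (f + g) x = G.map f x + G.map g x
    rw [Functor.map_add]
    rfl
  · intro X Y r f
    refine ModuleCat.hom_ext (LinearMap.ext fun x => ?_)
    refine Eq.trans (b := (r • (G.map f x) : G.obj Y)) ?_ ?_
    · show G.map (r • f) x = r • (G.map f x)
      rw [Functor.map_smul]
      rfl
    · exact (gMod_algebraMap η condb Y r (G.map f x)).symm

end NoriCriterion
end
end

section
/- Assume condition (a) holds, and assume condition (c) holds for all morphisms whose target is of the form S(q) with q an object of D (i.e., for every morphism w : S(p) → S(q) in E, the kernel of G(w) is an End(T)-submodule of T(p)). Then for every morphism f : S(p) → S(p') in E, the R-linear map G(f) : T(p) → T(p') is End(T)-linear, i.e. G(f)(a·x) = a·G(f)(x) for all a ∈ End(T) and x ∈ T(p). (Finite-diagram form of Lemma 2.8 of the paper.) -/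
/-!
# Lemma 2.8 of Ayoub–Barbieri-Viale, "Nori 1-motives" (finite-diagram form)

Setting: `R` a commutative Noetherian ring, `D` a finite category,
`T : D ⥤ ModuleCat R` with each `T.obj p` finitely generated over `R`;
`End T` is the `R`-algebra of natural endomorphisms of `T`, acting
tautologically on each `T.obj p` by `a • x = a.app p x`.
`E` is an `R`-linear abelian category, `G : E ⥤ ModuleCat R` is `R`-linear,
faithful and exact, with values in finitely generated `R`-modules, and
`S : D ⥤ E` satisfies `G ∘ S = T` (given by the natural isomorphism `η`).

Assuming condition (a), and condition (c) for all morphisms with target of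
the form `S.obj q`, every morphism `f : S.obj p ⟶ S.obj p'` in `E` induces an
`End T`-equivariant map `G f : T.obj p ⟶ T.obj p'`.
-/

open CategoryTheory CategoryTheory.Limits

noncomputable section

namespace NoriCriterion

universe u

/-- **Lemma 2.8** (finite-diagram form): under condition (a), and condition
(c) for morphisms with target `S.obj q`, for every `f : S.obj p ⟶ S.obj p'`
the map `G.map f`, transported via `η` to a map `T.obj p ⟶ T.obj p'`, is
`End T`-linear: it intertwines the tautological actions `a • x = a.app p x`. -/
theorem map_equivariant
    {R : Type u} [CommRing R] [IsNoetherianRing R]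
    {D : Type u} [SmallCategory D] [FinCategory D]
    (T : D ⥤ ModuleCat.{u} R)
    [∀ p : D, Module.Finite R (T.obj p)]
    {E : Type u} [Category.{u} E] [Abelian E] [Linear R E]
    (G : E ⥤ ModuleCat.{u} R) [G.Faithful] [G.Additive] [G.Linear R]
    [PreservesFiniteLimits G] [PreservesFiniteColimits G]
    (hGfin : ∀ A : E, Module.Finite R (G.obj A))
    (S : D ⥤ E) (η : S ⋙ G ≅ T)
    -- condition (a)
    (conda : ∀ p p' : D, ∃ (q : D) (i : p ⟶ q) (i' : p' ⟶ q),
      IsIso (biprod.desc (T.map i) (T.map i')))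
    -- condition (c) for morphisms with target of the form `S.obj q`
    (condcS : ∀ (p q : D) (w : S.obj p ⟶ S.obj q) (a : End T) (x : T.obj p),
      (η.inv.app p ≫ G.map w) x = 0 →
        (η.inv.app p ≫ G.map w) ((a.app p) x) = 0) :
    ∀ (p p' : D) (f : S.obj p ⟶ S.obj p') (a : End T) (x : T.obj p),
      (η.inv.app p ≫ G.map f ≫ η.hom.app p') ((a.app p) x) =
        (a.app p') ((η.inv.app p ≫ G.map f ≫ η.hom.app p') x) := by
  intro p p' f a x
  obtain ⟨q, i, i', hu⟩ := conda p p'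
  haveI : PreservesBinaryBiproduct (S.obj p) (S.obj p') G :=
    preservesBinaryBiproduct_of_preservesBinaryProduct G
  set v : S.obj p ⊞ S.obj p' ⟶ S.obj q := biprod.desc (S.map i) (S.map i') with hv
  -- `G.map v` is an isomorphism
  have h1 : (G.mapBiprod (S.obj p) (S.obj p')).inv ≫ G.map (biprod.desc (S.map i) (S.map i')) =
      biprod.desc (G.map (S.map i)) (G.map (S.map i')) := by
    exact biprod.mapBiprod_inv_map_desc (F := G) (X := S.obj p) (Y := S.obj p') (S.map i) (S.map i')
  rw [← hv] at h1
  have h2 : biprod.desc (G.map (S.map i)) (G.map (S.map i')) =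
      (biprod.mapIso (η.app p) (η.app p')).hom ≫
        biprod.desc (T.map i) (T.map i') ≫ η.inv.app q := by
    apply biprod.hom_ext' <;>
      simp only [biprod.inl_desc, biprod.inr_desc, biprod.mapIso_hom, biprod.inl_map_assoc,
        biprod.inr_map_assoc, biprod.inl_desc_assoc, biprod.inr_desc_assoc, Iso.app_hom]
    · have h : G.map (S.map i) ≫ η.hom.app q = η.hom.app p ≫ T.map i := by
        have := η.hom.naturality i; simpa [Functor.comp_map] using this
      rw [← Category.assoc, ← h]
      simp
    · have h : G.map (S.map i') ≫ η.hom.app q = η.hom.app p' ≫ T.map i' := by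
        have := η.hom.naturality i'; simpa [Functor.comp_map] using this
      rw [← Category.assoc, ← h]
      simp
  haveI : IsIso (biprod.desc (T.map i) (T.map i')) := hu
  haveI h3 : IsIso ((G.mapBiprod (S.obj p) (S.obj p')).inv ≫ G.map v) := by
    rw [h1, h2]; infer_instance
  haveI hGv : IsIso (G.map v) :=
    IsIso.of_isIso_comp_left (G.mapBiprod (S.obj p) (S.obj p')).inv (G.map v)
  haveI : Mono v := G.mono_of_mono_map inferInstance
  haveI : Epi v := G.epi_of_epi_map inferInstance
  haveI hvIso : IsIso v := isIso_of_mono_of_epi v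
  -- the morphism `w : S.obj q ⟶ S.obj p'`
  set w : S.obj q ⟶ S.obj p' := inv v ≫ (biprod.fst ≫ f - biprod.snd) with hw
  have hwi : S.map i ≫ w = f := by
    have hiv : S.map i ≫ inv v = biprod.inl := by
      rw [IsIso.comp_inv_eq]; simp [hv]
    rw [hw, ← Category.assoc, hiv]
    simp [Preadditive.comp_sub]
  have hwi' : S.map i' ≫ w = -(𝟙 (S.obj p')) := by
    have hiv : S.map i' ≫ inv v = biprod.inr := by
      rw [IsIso.comp_inv_eq]; simp [hv]
    rw [hw, ← Category.assoc, hiv]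
    simp [Preadditive.comp_sub]
  set φ : T.obj p ⟶ T.obj p' := η.inv.app p ≫ G.map f ≫ η.hom.app p' with hφ
  set ψ : T.obj q ⟶ T.obj p' := η.inv.app q ≫ G.map w ≫ η.hom.app p' with hψ
  have hnat : ∀ {r r' : D} (g : r ⟶ r'),
      T.map g ≫ η.inv.app r' = η.inv.app r ≫ G.map (S.map g) := by
    intro r r' g
    have := η.inv.naturality g
    simpa [Functor.comp_map] using this.symm
  have hψi : T.map i ≫ ψ = φ := by
    rw [hψ, ← Category.assoc, hnat i, Category.assoc, ← Functor.map_comp_assoc, hwi, hφ]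
  have hψi' : T.map i' ≫ ψ = -(𝟙 (T.obj p')) := by
    rw [hψ, ← Category.assoc, hnat i', Category.assoc, ← Functor.map_comp_assoc, hwi']
    simp
  set z : T.obj q := T.map i x + T.map i' (φ x) with hz
  have happ : ∀ (y : T.obj q), ψ y = η.hom.app p' ((η.inv.app q ≫ G.map w) y) := by
    intro y; rw [hψ]; simp
  have e1 : ∀ (y : T.obj p), ψ (T.map i y) = φ y := by
    intro y
    have := ConcreteCategory.congr_hom hψi y
    simpa using this
  have e2 : ∀ (y : T.obj p'), ψ (T.map i' y) = -y := by
    intro y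
    have := ConcreteCategory.congr_hom hψi' y
    simpa using this
  have hψz : ψ z = 0 := by
    rw [hz, map_add, e1, e2, add_neg_cancel]
  have hker : (η.inv.app q ≫ G.map w) z = 0 := by
    have h4 := congrArg (η.inv.app p') hψz
    rw [happ] at h4
    have hid : ∀ (y : (S ⋙ G).obj p'), η.inv.app p' (η.hom.app p' y) = y := by
      intro y
      have h5 := ConcreteCategory.congr_hom (η.hom_inv_id_app p') y
      simp only [comp_apply, id_apply] at h5
      exact h5
    rw [hid] at h4
    simpa using h4
  have hker' : (η.inv.app q ≫ G.map w) (a.app q z) = 0 := condcS q p' w a z hker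
  have hψaz : ψ (a.app q z) = 0 := by
    rw [happ, hker', map_zero]
  have haz : a.app q z = T.map i (a.app p x) + T.map i' (a.app p' (φ x)) := by
    have n1 : a.app q (T.map i x) = T.map i (a.app p x) := by
      have := ConcreteCategory.congr_hom (a.naturality i) x
      simp only [comp_apply] at this
      exact this
    have n2 : a.app q (T.map i' (φ x)) = T.map i' (a.app p' (φ x)) := by
      have := ConcreteCategory.congr_hom (a.naturality i') (φ x)
      simp only [comp_apply] at this
      exact this
    rw [hz, map_add, n1, n2]
  rw [haz, map_add, e1, e2] at hψaz
  have hfin : φ (a.app p x) = a.app p' (φ x) :=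
    sub_eq_zero.mp (by rw [sub_eq_add_neg]; exact hψaz)
  simpa [hφ] using hfin

end NoriCriterion
end
end

section
/- Assume conditions (a) and (c). Let A be an object of E, and let α : S(p) → A and α' : S(p') → A be epimorphisms in E, where p and p' are objects of D. By (c) and exactness of G, the surjection G(α) : T(p) → G(A) induces a unique left End(T)-module structure on G(A) making G(α) End(T)-linear, and likewise for G(α'). Then these two End(T)-module structures on G(A) coincide. (This is the step in the proof of Proposition 2.7 showing that the object V(A,α) of Nori's universal category is independent of the chosen presentation α.) -/
/-!
# Independence of the presentation in the proof of Proposition 2.7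
  (Ayoub–Barbieri-Viale, "Nori 1-motives"; finite-diagram form)

Setting: `R` a commutative Noetherian ring, `D` a finite category,
`T : D ⥤ ModuleCat R` with each `T.obj p` finitely generated over `R`;
`End T` is the `R`-algebra of natural endomorphisms of `T`, acting
tautologically on each `T.obj p` by `a • x = a.app p x`.
`E` is an `R`-linear abelian category, `G : E ⥤ ModuleCat R` is `R`-linear,
faithful and exact, with values in finitely generated `R`-modules, and
`S : D ⥤ E` satisfies `G ∘ S = T` (given by the natural isomorphism `η`).

Given an epimorphism `α : S.obj p ⟶ A`, the map `G α : T.obj p ⟶ G A` is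
surjective (as `G` is exact), and by condition (c) its kernel is an
`End T`-submodule; hence there is a unique left `End T`-module structure on
`G A` making `G α` equivariant: the action of `a : End T` sends `(G α) x` to
`(G α) (a.app p x)`.  The theorem below says that the structures induced by
two epimorphisms `α : S.obj p ⟶ A` and `α' : S.obj p' ⟶ A` coincide; this is
expressed elementwise, which is equivalent by surjectivity of `G α`, `G α'`.
-/

open CategoryTheory CategoryTheory.Limits

noncomputable section

namespace NoriCriterion

universe u

/-- **Independence of the presentation** (step in the proof of Proposition
2.7, finite-diagram form): under conditions (a) and (c), for epimorphisms
`α : S.obj p ⟶ A` and `α' : S.obj p' ⟶ A`, the `End T`-module structures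
induced on `G A` by `G α` and by `G α'` coincide. -/
theorem induced_module_structure_independent
    {R : Type u} [CommRing R] [IsNoetherianRing R]
    {D : Type u} [SmallCategory D] [FinCategory D]
    (T : D ⥤ ModuleCat.{u} R)
    [∀ p : D, Module.Finite R (T.obj p)]
    {E : Type u} [Category.{u} E] [Abelian E] [Linear R E]
    (G : E ⥤ ModuleCat.{u} R) [G.Faithful] [G.Additive] [G.Linear R]
    [PreservesFiniteLimits G] [PreservesFiniteColimits G]
    (hGfin : ∀ A : E, Module.Finite R (G.obj A))
    (S : D ⥤ E) (η : S ⋙ G ≅ T)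
    -- condition (a)
    (conda : ∀ p p' : D, ∃ (q : D) (i : p ⟶ q) (i' : p' ⟶ q),
      IsIso (biprod.desc (T.map i) (T.map i')))
    -- condition (c)
    (condc : ∀ (p : D) (A : E) (w : S.obj p ⟶ A) (a : End T) (x : T.obj p),
      (η.inv.app p ≫ G.map w) x = 0 →
        (η.inv.app p ≫ G.map w) ((a.app p) x) = 0)
    (p p' : D) (A : E)
    (α : S.obj p ⟶ A) (hα : Epi α)
    (α' : S.obj p' ⟶ A) (hα' : Epi α') :
    ∀ (a : End T) (x : T.obj p) (y : T.obj p'),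
      (η.inv.app p ≫ G.map α) x = (η.inv.app p' ≫ G.map α') y →
        (η.inv.app p ≫ G.map α) ((a.app p) x) =
          (η.inv.app p' ≫ G.map α') ((a.app p') y) := by
  intro a x y hxy
  obtain ⟨q, i, i', hiso⟩ := conda p p'
  -- the comparison morphism in E
  haveI : PreservesBinaryBiproducts G :=
    Limits.preservesBinaryBiproducts_of_preservesBinaryProducts G
  set φ : S.obj p ⊞ S.obj p' ⟶ S.obj q := biprod.desc (S.map i) (S.map i') with hφ
  -- G.map φ is an isomorphism
  have hGφ : (G.mapBiprod (S.obj p) (S.obj p')).inv ≫ G.map φ =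
      biprod.map (η.hom.app p) (η.hom.app p') ≫
        biprod.desc (T.map i) (T.map i') ≫ η.inv.app q := by
    rw [hφ, Limits.biprod.mapBiprod_inv_map_desc]
    apply biprod.hom_ext' <;>
      simp only [biprod.inl_desc, biprod.inr_desc, biprod.inl_map_assoc,
        biprod.inr_map_assoc, biprod.inl_desc_assoc, biprod.inr_desc_assoc]
    · have := η.inv.naturality i
      simp only [Functor.comp_map] at this
      rw [this, Iso.hom_inv_id_app_assoc]
    · have := η.inv.naturality i'
      simp only [Functor.comp_map] at this
      rw [this, Iso.hom_inv_id_app_assoc]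
  have hGφiso : IsIso (G.map φ) := by
    rw [Iso.inv_comp_eq] at hGφ
    rw [hGφ]
    haveI : IsIso (biprod.map (η.hom.app p) (η.hom.app p')) :=
      (inferInstance : IsIso (biprod.mapIso (η.app p) (η.app p')).hom)
    infer_instance
  -- hence φ is an isomorphism, since G is faithful and E is abelian (balanced)
  have hmono : Mono φ := by
    have : Mono (G.map φ) := by infer_instance
    exact G.mono_of_mono_map this
  have hepi : Epi φ := by
    have : Epi (G.map φ) := by infer_instance
    exact G.epi_of_epi_map this
  have hφiso : IsIso φ := isIso_of_mono_of_epi φ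
  -- the morphism w : S.obj q ⟶ A
  set w : S.obj q ⟶ A := inv φ ≫ biprod.desc α (-α') with hw
  have hwi : S.map i ≫ w = α := by
    rw [hw, ← biprod.inl_desc (S.map i) (S.map i'), ← hφ, Category.assoc,
      IsIso.hom_inv_id_assoc, biprod.inl_desc]
  have hwi' : S.map i' ≫ w = -α' := by
    rw [hw, ← biprod.inr_desc (S.map i) (S.map i'), ← hφ, Category.assoc,
      IsIso.hom_inv_id_assoc, biprod.inr_desc]
  -- key computation of (η.inv.app q ≫ G.map w) on elements of the form
  -- T.map i x + T.map i' y
  have key : ∀ (u : T.obj p) (v : T.obj p'),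
      (η.inv.app q ≫ G.map w) ((T.map i) u + (T.map i') v) =
        (η.inv.app p ≫ G.map α) u - (η.inv.app p' ≫ G.map α') v := by
    intro u v
    have h1 : T.map i ≫ η.inv.app q ≫ G.map w = η.inv.app p ≫ G.map α := by
      have := η.inv.naturality i
      simp only [Functor.comp_map] at this
      rw [← Category.assoc, this, Category.assoc, ← G.map_comp, hwi]
    have h2 : T.map i' ≫ η.inv.app q ≫ G.map w = -(η.inv.app p' ≫ G.map α') := by
      have := η.inv.naturality i'
      simp only [Functor.comp_map] at this
      rw [← Category.assoc, this, Category.assoc, ← G.map_comp, hwi',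
        Functor.map_neg]
      simp
    have e1 : (T.map i ≫ η.inv.app q ≫ G.map w) u = (η.inv.app p ≫ G.map α) u := by
      rw [h1]
    have e2 : (T.map i' ≫ η.inv.app q ≫ G.map w) v =
        (-(η.inv.app p' ≫ G.map α')) v := by rw [h2]
    simp only [ConcreteCategory.comp_apply, Function.comp_apply] at e1 e2 ⊢
    rw [map_add, map_add, e1, e2]
    have h3 : ((-η.inv.app p' ≫ G.map α') v) =
        -((G.map α') ((η.inv.app p') v)) := by
      change ((-(η.inv.app p' ≫ G.map α')).hom) v = _
      rw [ModuleCat.hom_neg, LinearMap.neg_apply]; rfl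
    rw [h3]
    abel
  -- apply condition (c)
  have hz : (η.inv.app q ≫ G.map w) ((T.map i) x + (T.map i') y) = 0 := by
    rw [key x y, hxy]
    abel
  have hz' := condc q A w a _ hz
  -- rewrite a.app q (T.map i x + T.map i' y)
  have hnat : (a.app q) ((T.map i) x + (T.map i') y) =
      (T.map i) ((a.app p) x) + (T.map i') ((a.app p') y) := by
    have n1 : (T.map i ≫ a.app q) x = (a.app p ≫ T.map i) x := by
      rw [a.naturality i]
    have n2 : (T.map i' ≫ a.app q) y = (a.app p' ≫ T.map i') y := by
      rw [a.naturality i']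
    simp only [ConcreteCategory.comp_apply, Function.comp_apply] at n1 n2
    rw [map_add, n1, n2]
  rw [hnat, key _ _] at hz'
  have := sub_eq_zero.mp hz'
  exact this

end NoriCriterion
end
end
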